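/- Define the structure 𝓜 whose domain is the set of pairs (b,n) ∈ {0,1} × ℤ such that b = 0 implies n ≥ 0, with constant 0^𝓜 = (0,0), successor s(b,n) = (b, n+1), predecessor p(0,n) = (0, max(n-1, 0)) and p(1,n) = (1, n-1), and addition (b₁,n₁)+(b₂,n₂) = (max(b₁,b₂), n₁+n₂). Then 𝓜 satisfies the axioms (A1) 0 ≠ s(x), (A2) p(0)=0, (A3) p(s(x))=x, (A4) x+0=x, (A5) x+s(y)=s(x+y), and (B1) x ≠ 0 → x = s(p(x)). -/

import Mathlib

/-- The domain of the structure 𝓜: pairs (b, n) with b ∈ {0,1} (as Bool,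
`false` playing the role of 0) and n ∈ ℤ, where b = 0 forces n ≥ 0. -/
def MDom : Type := {q : Bool × ℤ // q.1 = false → 0 ≤ q.2}

def MZero : MDom := ⟨(false, 0), fun _ => le_refl 0⟩

def MSucc (x : MDom) : MDom :=
  ⟨(x.val.1, x.val.2 + 1), fun h => le_trans (x.property h) (by omega)⟩

def MPred (x : MDom) : MDom :=
  if h : x.val.1 = false then
    ⟨(false, max (x.val.2 - 1) 0), fun _ => le_max_right _ _⟩
  else
    ⟨(true, x.val.2 - 1), fun h' => by simp at h'⟩

def MAdd (x y : MDom) : MDom :=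
  ⟨(max x.val.1 y.val.1, x.val.2 + y.val.2), fun h => by
    rcases max_eq_bot.mp h with ⟨h1, h2⟩
    exact add_nonneg (x.property h1) (y.property h2)⟩

theorem stmt_7 :
    (∀ x : MDom, MZero ≠ MSucc x) ∧
    (MPred MZero = MZero) ∧
    (∀ x : MDom, MPred (MSucc x) = x) ∧
    (∀ x : MDom, MAdd x MZero = x) ∧
    (∀ x y : MDom, MAdd x (MSucc y) = MSucc (MAdd x y)) ∧
    (∀ x : MDom, x ≠ MZero → x = MSucc (MPred x)) := by
  refine ⟨?_, ?_, ?_, ?_, ?_, ?_⟩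
  · rintro ⟨⟨b, n⟩, hp⟩ h
    have h' := congrArg Subtype.val h
    simp [MZero, MSucc] at h'
    obtain ⟨hb, hn⟩ := h'
    have := hp hb
    omega
  · simp [MPred, MZero]
    rfl
  · rintro ⟨⟨b, n⟩, hp⟩
    cases b with
    | false =>
      have hn := hp rfl
      apply Subtype.ext
      simp [MPred, MSucc]
      omega
    | true =>
      apply Subtype.ext
      simp [MPred, MSucc]
  · rintro ⟨⟨b, n⟩, hp⟩
    apply Subtype.ext
    simp [MAdd, MZero]
  · rintro ⟨⟨b, n⟩, hp⟩ ⟨⟨c, m⟩, hq⟩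
    apply Subtype.ext
    simp [MAdd, MSucc]
    ring
  · rintro ⟨⟨b, n⟩, hp⟩ hne
    apply Subtype.ext
    cases b with
    | false =>
      have hn := hp rfl
      have : n ≠ 0 := by
        intro h; exact hne (Subtype.ext (by simp [MZero, h]))
      simp [MPred, MSucc]
      omega
    | true =>
      simp [MPred, MSucc]
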